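/- For the biased assimilation model on the undirected complete graph with unit weights and $b_i > 1$ for all $i$, at the polarization fixed point with $n_1$ agents at $0$ and $n_2 = N-n_1$ agents at $1$ (where $2 \le n_1 \le N-2$), the Jacobian is diagonal with entries $w_{ii}/(w_{ii} + d_i^{(0)})$ for agents at $0$ and $w_{ii}/(w_{ii} + d_i^{(1)})$ for agents at $1$, all lying in $[0,1)$; hence the polarization equilibrium is locally exponentially stable. -/

import Mathlib

open Finset Filter Topology

/-- Weighted sum of neighbors' opinions: `s_i = ∑_{j ∈ N_i} w_{ij} x_j`. -/
noncomputable def wsum {N : ℕ} (w : Fin N → Fin N → ℝ) (Nbr : Fin N → Finset (Fin N))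
    (x : Fin N → ℝ) (i : Fin N) : ℝ :=
  ∑ j ∈ Nbr i, w i j * x j

/-- Weighted degree `d_i = ∑_{j ∈ N_i} w_{ij}`. -/
noncomputable def degw {N : ℕ} (w : Fin N → Fin N → ℝ) (Nbr : Fin N → Finset (Fin N))
    (i : Fin N) : ℝ :=
  ∑ j ∈ Nbr i, w i j

/-- Biased assimilation update map (componentwise). Powers are real powers. -/
noncomputable def F {N : ℕ} (w : Fin N → Fin N → ℝ) (Nbr : Fin N → Finset (Fin N))
    (b : Fin N → ℝ) (x : Fin N → ℝ) (i : Fin N) : ℝ :=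
  (w i i * x i + x i ^ b i * wsum w Nbr x i) /
    (w i i + x i ^ b i * wsum w Nbr x i + (1 - x i) ^ b i * (degw w Nbr i - wsum w Nbr x i))

/-- The directed influence graph (edge `j → i` iff `j ∈ Nbr i`) is strongly connected. -/
def StronglyConnected {N : ℕ} (Nbr : Fin N → Finset (Fin N)) : Prop :=
  ∀ i j : Fin N, Relation.TransGen (fun a c => a ∈ Nbr c) i j

/-- Lyapunov stability of a fixed point of the discrete-time system `x⁺ = G x`. -/
def LyapStable {E : Type*} [NormedAddCommGroup E] (G : E → E) (q : E) : Prop :=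
  ∀ ε > 0, ∃ δ > 0, ∀ x, ‖x - q‖ < δ → ∀ k : ℕ, ‖G^[k] x - q‖ < ε

/-- Local exponential stability of a fixed point of `x⁺ = G x`. -/
def LocExpStable {E : Type*} [NormedAddCommGroup E] (G : E → E) (q : E) : Prop :=
  ∃ δ > 0, ∃ C > 0, ∃ r, 0 ≤ r ∧ r < 1 ∧
    ∀ x, ‖x - q‖ ≤ δ → ∀ k : ℕ, ‖G^[k] x - q‖ ≤ C * r ^ k * ‖x - q‖

/-- Spectral radius of a real square matrix: supremum of moduli of its complex eigenvalues. -/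
noncomputable def specRad {n : ℕ} (M : Matrix (Fin n) (Fin n) ℝ) : ℝ :=
  sSup {r : ℝ | ∃ μ : ℂ, (M.map (fun a => (a : ℂ))).charpoly.IsRoot μ ∧ r = ‖μ‖}

theorem stmt17 {N : ℕ} (n1 : ℕ) (hn1 : 2 ≤ n1) (hn2 : n1 ≤ N - 2)
    (w : Fin N → Fin N → ℝ) (hw : ∀ i j, i ≠ j → w i j = 1) (hwii : ∀ i, 0 ≤ w i i)
    (Nbr : Fin N → Finset (Fin N)) (hNbr : ∀ i, Nbr i = Finset.univ.erase i)
    (b : Fin N → ℝ) (hb : ∀ i, 1 < b i)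
    (x : Fin N → ℝ) (hx : ∀ i, x i = 0 ∨ x i = 1)
    (hcard : (Finset.univ.filter (fun i => x i = 0)).card = n1) :
    (∀ i j, fderiv ℝ (fun y => F w Nbr b y i) x (Pi.single j 1) =
      if i = j then
        (if x i = 0 then w i i / (w i i + ((n1 : ℝ) - 1))
         else w i i / (w i i + (((N - n1 : ℕ) : ℝ) - 1)))
      else 0) ∧
    (∀ i, (if x i = 0 then w i i / (w i i + ((n1 : ℝ) - 1))
           else w i i / (w i i + (((N - n1 : ℕ) : ℝ) - 1))) ∈ Set.Ico (0 : ℝ) 1) ∧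
    LocExpStable (F w Nbr b) x := by
  classical
  have hn1N : n1 ≤ N := by omega
  have hn2' : 2 ≤ N - n1 := by omega
  have hNpos : 0 < N := by omega
  have hcast : ((N - n1 : ℕ) : ℝ) = (N : ℝ) - n1 := by
    rw [Nat.cast_sub hn1N]
  have hn1R : (2 : ℝ) ≤ (n1 : ℝ) := by exact_mod_cast hn1
  have hn2R : (2 : ℝ) ≤ ((N - n1 : ℕ) : ℝ) := by exact_mod_cast hn2'
  -- total sum of opinions
  have hxsum : ∑ j, x j = ((N - n1 : ℕ) : ℝ) := by
    rw [← Finset.sum_filter_add_sum_filter_not Finset.univ (fun j => x j = 0) x]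
    have h0 : ∑ j ∈ Finset.univ.filter (fun j => x j = 0), x j = 0 :=
      Finset.sum_eq_zero (fun j hj => (Finset.mem_filter.mp hj).2)
    have h1 : ∑ j ∈ Finset.univ.filter (fun j => ¬ x j = 0), x j
        = ((Finset.univ.filter (fun j => ¬ x j = 0)).card : ℝ) := by
      rw [Finset.sum_congr rfl
        (fun j hj => ((hx j).resolve_left (Finset.mem_filter.mp hj).2))]
      simp
    have hc : (Finset.univ.filter (fun j => ¬ x j = 0)).card = N - n1 := by
      have h2 := Finset.card_filter_add_card_filter_not
        (s := (Finset.univ : Finset (Fin N))) (p := fun j => x j = 0)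
      have h3 : (Finset.univ : Finset (Fin N)).card = N := by simp
      omega
    rw [h0, h1, hc, zero_add]
  -- degree
  have hdeg : ∀ i, degw w Nbr i = (N : ℝ) - 1 := by
    intro i
    rw [degw, hNbr]
    rw [Finset.sum_congr rfl (fun j hj => hw i j (Finset.ne_of_mem_erase hj).symm)]
    rw [Finset.sum_const, Finset.card_erase_of_mem (Finset.mem_univ i)]
    rw [Finset.card_univ, Fintype.card_fin, nsmul_eq_mul, mul_one,
      Nat.cast_sub (by omega : 1 ≤ N), Nat.cast_one]
  -- weighted neighbor sum at the equilibrium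
  have hws : ∀ i, wsum w Nbr x i = ((N - n1 : ℕ) : ℝ) - x i := by
    intro i
    rw [wsum, hNbr]
    rw [Finset.sum_congr rfl (fun j hj => by
      rw [hw i j (Finset.ne_of_mem_erase hj).symm, one_mul])]
    rw [Finset.sum_erase_eq_sub (Finset.mem_univ i), hxsum]
  have hbne : ∀ i, b i ≠ 0 := fun i => by have := hb i; positivity
  have hb1 : ∀ i, b i - 1 ≠ 0 := fun i => by have := hb i; intro h; linarith [sub_eq_zero.mp h]
  -- the two possible diagonal entries
  have hpos0 : ∀ i, (0:ℝ) < w i i + ((n1 : ℝ) - 1) := fun i => by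
    have := hwii i; linarith
  have hpos1 : ∀ i, (0:ℝ) < w i i + (((N - n1 : ℕ) : ℝ) - 1) := fun i => by
    have := hwii i; linarith
  set lam : Fin N → ℝ := fun i =>
    if x i = 0 then w i i / (w i i + ((n1 : ℝ) - 1))
    else w i i / (w i i + (((N - n1 : ℕ) : ℝ) - 1)) with hlamdef
  -- denominator at the equilibrium
  have hDval : ∀ i, (w i i + x i ^ b i * wsum w Nbr x i +
      (1 - x i) ^ b i * (degw w Nbr i - wsum w Nbr x i)) =
      (if x i = 0 then w i i + ((n1 : ℝ) - 1) else w i i + (((N - n1 : ℕ) : ℝ) - 1)) := by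
    intro i
    rcases hx i with h0 | h1
    · rw [if_pos h0, hws i, hdeg i, h0, sub_zero, sub_zero, Real.zero_rpow (hbne i),
        Real.one_rpow, hcast]
      ring
    · rw [if_neg (by rw [h1]; norm_num), hws i, hdeg i, h1, Real.one_rpow, sub_self,
        Real.zero_rpow (hbne i)]
      ring
  have hDne : ∀ i, (w i i + x i ^ b i * wsum w Nbr x i +
      (1 - x i) ^ b i * (degw w Nbr i - wsum w Nbr x i)) ≠ 0 := by
    intro i
    rw [hDval i]
    split_ifs
    · exact (hpos0 i).ne'
    · exact (hpos1 i).ne'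
  -- key derivative computation
  have key : ∀ i, HasFDerivAt (fun y => F w Nbr b y i)
      (lam i • ContinuousLinearMap.proj (R := ℝ) (φ := fun _ : Fin N => ℝ) i) x := by
    intro i
    have hproj : HasFDerivAt (fun y : Fin N → ℝ => y i)
        (ContinuousLinearMap.proj (R := ℝ) i) x := hasFDerivAt_apply (𝕜 := ℝ) i x
    have hS : HasFDerivAt (fun y => wsum w Nbr y i)
        (∑ j ∈ Nbr i, w i j • ContinuousLinearMap.proj (R := ℝ) (φ := fun _ : Fin N => ℝ) j) x :=
      HasFDerivAt.fun_sum (fun j _ => (hasFDerivAt_apply (𝕜 := ℝ) j x).const_mul (w i j))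
    have hg : HasFDerivAt (fun y : Fin N → ℝ => y i ^ b i)
        ((b i * x i ^ (b i - 1)) • ContinuousLinearMap.proj (R := ℝ) (φ := fun _ : Fin N => ℝ) i) x :=
      (Real.hasDerivAt_rpow_const (Or.inr (hb i).le)).comp_hasFDerivAt x hproj
    have hh : HasFDerivAt (fun y : Fin N → ℝ => (1 - y i) ^ b i)
        ((b i * (1 - x i) ^ (b i - 1) * (-1)) •
          ContinuousLinearMap.proj (R := ℝ) (φ := fun _ : Fin N => ℝ) i) x := by
      have h1 : HasDerivAt (fun t : ℝ => (1 - t) ^ b i)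
          (b i * (1 - x i) ^ (b i - 1) * (-1)) (x i) := by
        have := (Real.hasDerivAt_rpow_const (x := 1 - x i) (p := b i)
          (Or.inr (hb i).le)).comp (x i) ((hasDerivAt_id (x i)).const_sub 1)
        simpa [Function.comp_def] using this
      exact h1.comp_hasFDerivAt x hproj
    have hnum := (hproj.const_mul (w i i)).add (hg.mul hS)
    have hden := (((hasFDerivAt_const (w i i) x).add (hg.mul hS)).add
      (hh.mul ((hasFDerivAt_const (degw w Nbr i) x).sub hS)))
    have hinv := (hasDerivAt_inv (hDne i)).comp_hasFDerivAt x hden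
    have hdiv := hnum.mul hinv
    have hF : (fun y => F w Nbr b y i) = (fun y : Fin N → ℝ =>
        (w i i * y i + y i ^ b i * wsum w Nbr y i) *
          (w i i + y i ^ b i * wsum w Nbr y i +
            (1 - y i) ^ b i * (degw w Nbr i - wsum w Nbr y i))⁻¹) := by
      funext y; rw [F, div_eq_mul_inv]
    rw [hF]
    refine hdiv.congr_fderiv ?_
    ext v
    simp only [ContinuousLinearMap.coe_smul', Pi.smul_apply, ContinuousLinearMap.add_apply,
      ContinuousLinearMap.coe_sum', Finset.sum_apply, ContinuousLinearMap.smul_apply,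
      ContinuousLinearMap.sub_apply, ContinuousLinearMap.zero_apply, Function.comp_apply,
      ContinuousLinearMap.proj_apply, smul_eq_mul, Pi.add_apply, Pi.mul_apply, Pi.sub_apply]
    rcases hx i with h0 | h1
    · rw [hlamdef]
      simp only [h0, if_pos, hws i, hdeg i, Real.zero_rpow (hbne i), Real.zero_rpow (hb1 i),
        Real.one_rpow, sub_zero]
      have hD : w i i + ((n1:ℝ) - 1) ≠ 0 := (hpos0 i).ne'
      have hE : (N:ℝ) - 1 - ((N - n1 : ℕ) : ℝ) = (n1:ℝ) - 1 := by rw [hcast]; ring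
      rw [hE]
      field_simp
      simp only [zero_mul, mul_zero, add_zero, zero_add, neg_zero]
      rw [div_eq_iff (pow_ne_zero 2 hD)]; ring
    · rw [hlamdef]
      have hne : ¬ x i = 0 := by rw [h1]; norm_num
      simp only [h1, if_neg hne, hws i, hdeg i, Real.one_rpow, sub_self,
        Real.zero_rpow (hbne i), Real.zero_rpow (hb1 i), one_ne_zero, if_false]
      have hD : w i i + (((N:ℝ) - (n1:ℝ)) - 1) ≠ 0 := by
        rw [← hcast]; exact (hpos1 i).ne'
      rw [hcast]
      simp only [zero_mul, mul_zero, add_zero, zero_add, sub_zero, neg_zero, mul_one, one_mul]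
      field_simp
      ring
  refine ⟨?_, ?_, ?_⟩
  · intro i j
    rw [(key i).fderiv]
    simp only [ContinuousLinearMap.coe_smul', Pi.smul_apply, ContinuousLinearMap.proj_apply,
      smul_eq_mul, Pi.single_apply]
    rw [hlamdef]
    by_cases hij : i = j
    · simp [hij]
    · simp [hij, Ne.symm hij]
  · intro i
    constructor
    · split_ifs
      · exact div_nonneg (hwii i) (hpos0 i).le
      · exact div_nonneg (hwii i) (hpos1 i).le
    · split_ifs
      · rw [div_lt_one (hpos0 i)]; linarith [hwii i]
      · rw [div_lt_one (hpos1 i)]; linarith [hwii i]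
  · -- local exponential stability
    have hlam0 : ∀ i, 0 ≤ lam i := by
      intro i; rw [hlamdef]; dsimp only; split_ifs
      · exact div_nonneg (hwii i) (hpos0 i).le
      · exact div_nonneg (hwii i) (hpos1 i).le
    have hlam1 : ∀ i, lam i < 1 := by
      intro i; rw [hlamdef]; dsimp only; split_ifs
      · rw [div_lt_one (hpos0 i)]; linarith [hwii i]
      · rw [div_lt_one (hpos1 i)]; linarith [hwii i]
    -- fixed point
    have hfix : F w Nbr b x = x := by
      funext i
      rcases hx i with h0 | h1
      · rw [F, h0, Real.zero_rpow (hbne i)]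
        simp
      · rw [F, h1, Real.one_rpow, sub_self, Real.zero_rpow (hbne i)]
        rw [mul_one, zero_mul, add_zero]
        exact div_self (by
          have h := hDne i
          rw [h1, Real.one_rpow, sub_self, Real.zero_rpow (hbne i)] at h
          simpa using h)
    -- full derivative
    set L : (Fin N → ℝ) →L[ℝ] (Fin N → ℝ) :=
      ContinuousLinearMap.pi (fun i => lam i •
        ContinuousLinearMap.proj (R := ℝ) (φ := fun _ : Fin N => ℝ) i) with hLdef
    have hL : HasFDerivAt (F w Nbr b) L x := hasFDerivAt_pi.2 key
    have hne : (Finset.univ : Finset (Fin N)).Nonempty := ⟨⟨0, hNpos⟩, Finset.mem_univ _⟩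
    set r : ℝ := Finset.univ.sup' hne lam with hrdef
    have hr0 : 0 ≤ r := le_trans (hlam0 _) (Finset.le_sup' lam (Finset.mem_univ ⟨0, hNpos⟩))
    have hr1 : r < 1 := (Finset.sup'_lt_iff hne).2 (fun i _ => hlam1 i)
    have hrl : ∀ i, lam i ≤ r := fun i => Finset.le_sup' lam (Finset.mem_univ i)
    have hbound : ∀ v : Fin N → ℝ, ‖L v‖ ≤ r * ‖v‖ := by
      intro v
      rw [pi_norm_le_iff_of_nonneg (by positivity)]
      intro i
      have h1 : L v i = lam i * v i := by
        rw [hLdef]; simp [ContinuousLinearMap.proj_apply]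
      rw [h1, Real.norm_eq_abs, abs_mul, abs_of_nonneg (hlam0 i)]
      calc lam i * |v i| ≤ r * |v i| :=
            mul_le_mul_of_nonneg_right (hrl i) (abs_nonneg _)
        _ ≤ r * ‖v‖ := mul_le_mul_of_nonneg_left (norm_le_pi_norm v i) hr0
    have hεpos : 0 < (1 - r) / 2 := by linarith
    have hev := hL.isLittleO.def hεpos
    rw [Metric.eventually_nhds_iff] at hev
    obtain ⟨δ', hδ'pos, hδ'⟩ := hev
    set ρ : ℝ := (1 + r) / 2 with hρdef
    have hρ0 : 0 ≤ ρ := by rw [hρdef]; linarith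
    have hρ1 : ρ < 1 := by rw [hρdef]; linarith
    refine ⟨δ' / 2, by positivity, 1, one_pos, ρ, hρ0, hρ1, ?_⟩
    intro y hy k
    have main : ∀ z : Fin N → ℝ, ‖z - x‖ ≤ δ' / 2 → ‖F w Nbr b z - x‖ ≤ ρ * ‖z - x‖ := by
      intro z hz
      have h1 : ‖F w Nbr b z - F w Nbr b x - L (z - x)‖ ≤ (1 - r) / 2 * ‖z - x‖ := by
        have := hδ' (show dist z x < δ' by rw [dist_eq_norm]; linarith)
        simpa using this
      have h2 : ‖L (z - x)‖ ≤ r * ‖z - x‖ := hbound _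
      have h3 : F w Nbr b z - x =
          (F w Nbr b z - F w Nbr b x - L (z - x)) + L (z - x) := by
        rw [hfix]; abel
      calc ‖F w Nbr b z - x‖
          ≤ ‖F w Nbr b z - F w Nbr b x - L (z - x)‖ + ‖L (z - x)‖ := by
            rw [h3]; exact norm_add_le _ _
        _ ≤ (1 - r) / 2 * ‖z - x‖ + r * ‖z - x‖ := add_le_add h1 h2
        _ = ρ * ‖z - x‖ := by rw [hρdef]; ring
    have hiter : ∀ k : ℕ, ‖(F w Nbr b)^[k] y - x‖ ≤ ρ ^ k * ‖y - x‖ ∧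
        ‖(F w Nbr b)^[k] y - x‖ ≤ δ' / 2 := by
      intro k
      induction k with
      | zero =>
        refine ⟨by simp, by simpa using hy⟩
      | succ k ih =>
        rw [Function.iterate_succ_apply']
        have h1 := main _ ih.2
        constructor
        · calc ‖F w Nbr b ((F w Nbr b)^[k] y) - x‖
              ≤ ρ * ‖(F w Nbr b)^[k] y - x‖ := h1
            _ ≤ ρ * (ρ ^ k * ‖y - x‖) := mul_le_mul_of_nonneg_left ih.1 hρ0
            _ = ρ ^ (k + 1) * ‖y - x‖ := by ring
        · calc ‖F w Nbr b ((F w Nbr b)^[k] y) - x‖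
              ≤ ρ * ‖(F w Nbr b)^[k] y - x‖ := h1
            _ ≤ 1 * (δ' / 2) := mul_le_mul hρ1.le ih.2 (norm_nonneg _) zero_le_one
            _ = δ' / 2 := one_mul _
    calc ‖(F w Nbr b)^[k] y - x‖ ≤ ρ ^ k * ‖y - x‖ := (hiter k).1
      _ = 1 * ρ ^ k * ‖y - x‖ := by ring
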